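/- arXiv:1111.6991 — 7 statements merged into one kernel-verified Lean document; each statement's English description precedes it below -/
import Mathlib

section
/- With regularity defined via the choice-derived function α, if P₁ and P₂ are regular families of subsets of A, then P₁ ⊆ P₂ or P₂ ⊆ P₁. -/
open Set

variable {A : Type*}

/-- A family `P` of subsets of `A` is *regular* (w.r.t. the choice-derived map `α`) if:
(1) it is linearly ordered by `⊆`; (2) every nonempty subfamily has a `⊆`-least element;
(3) `∅ ∈ P`; (4) every nonempty `p ∈ P` equals `p₁ ∪ {α p₁}` where `p₁ = ⋃ {q ∈ P : q ⊂ p}`. -/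
def RegularFamily (α : Set A → A) (P : Set (Set A)) : Prop :=
  (∀ p ∈ P, ∀ q ∈ P, p ⊆ q ∨ q ⊆ p) ∧
  (∀ γ ⊆ P, γ.Nonempty → ∃ m ∈ γ, ∀ x ∈ γ, m ⊆ x) ∧
  (∅ ∈ P) ∧
  (∀ p ∈ P, p.Nonempty →
    p = (⋃₀ {q ∈ P | q ⊂ p}) ∪ {α (⋃₀ {q ∈ P | q ⊂ p})})

/-- Key lemma: if `c` is the union of the members of a regular family `P` contained in it,
and some member of `P` is not contained in `c`, then `c ∪ {α c} ∈ P`. -/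
lemma regular_key (α : Set A → A) (P : Set (Set A)) (h : RegularFamily α P)
    (c : Set A) (hc : ⋃₀ {s ∈ P | s ⊆ c} = c)
    (hex : ∃ s ∈ P, ¬ s ⊆ c) : c ∪ {α c} ∈ P := by
  obtain ⟨hlin, hleast, _, hrec⟩ := h
  obtain ⟨u, ⟨huP, huc⟩, humin⟩ :=
    hleast {s ∈ P | ¬ s ⊆ c} (fun s hs => hs.1) hex
  have hune : u.Nonempty := by
    rcases u.eq_empty_or_nonempty with h | h
    · exact absurd (h ▸ empty_subset c) huc
    · exact h
  have hseg : {s ∈ P | s ⊂ u} = {s ∈ P | s ⊆ c} := by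
    ext s
    constructor
    · rintro ⟨hsP, hsu⟩
      refine ⟨hsP, ?_⟩
      by_contra hsc
      exact hsu.not_subset (humin s ⟨hsP, hsc⟩)
    · rintro ⟨hsP, hsc⟩
      refine ⟨hsP, ?_⟩
      have hsu : s ⊆ u := by
        rcases hlin s hsP u huP with h | h
        · exact h
        · exact absurd (h.trans hsc) huc
      exact ssubset_of_subset_not_subset hsu (fun hus => huc (hus.trans hsc))
  have hu := hrec u huP hune
  rw [hseg, hc] at hu
  rwa [← hu]

theorem regular_comparable
    (φ : Set A → A) (hφ : ∀ X : Set A, X.Nonempty → φ X ∈ X)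
    (α : Set A → A) (hα : ∀ X : Set A, α X = φ Xᶜ)
    (P₁ P₂ : Set (Set A)) (h₁ : RegularFamily α P₁) (h₂ : RegularFamily α P₂) :
    P₁ ⊆ P₂ ∨ P₂ ⊆ P₁ := by
  by_contra hcon
  push_neg at hcon
  obtain ⟨h12, h21⟩ := hcon
  rw [not_subset] at h12 h21
  obtain ⟨p0, hp01, hp02⟩ := h12
  obtain ⟨r0, hr02, hr01⟩ := h21
  obtain ⟨p, ⟨hpP, hpN⟩, hpmin⟩ :=
    h₁.2.1 {q ∈ P₁ | q ∉ P₂} (fun q hq => hq.1) ⟨p0, hp01, hp02⟩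
  obtain ⟨r, ⟨hrP, hrN⟩, hrmin⟩ :=
    h₂.2.1 {q ∈ P₂ | q ∉ P₁} (fun q hq => hq.1) ⟨r0, hr02, hr01⟩
  have hpne : p.Nonempty := by
    rcases p.eq_empty_or_nonempty with h | h
    · exact absurd (h ▸ h₂.2.2.1) hpN
    · exact h
  have hrne : r.Nonempty := by
    rcases r.eq_empty_or_nonempty with h | h
    · exact absurd (h ▸ h₁.2.2.1) hrN
    · exact h
  set p' := ⋃₀ {q ∈ P₁ | q ⊂ p} with hp'def
  set r' := ⋃₀ {q ∈ P₂ | q ⊂ r} with hr'def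
  have hSsub : ∀ q, q ∈ P₁ → q ⊂ p → q ∈ P₂ := by
    intro q hq hqp
    by_contra h
    exact hqp.not_subset (hpmin q ⟨hq, h⟩)
  have hTsub : ∀ q, q ∈ P₂ → q ⊂ r → q ∈ P₁ := by
    intro q hq hqr
    by_contra h
    exact hqr.not_subset (hrmin q ⟨hq, h⟩)
  have hrecp := h₁.2.2.2 p hpP hpne
  have hrecr := h₂.2.2.2 r hrP hrne
  have hp'c : ⋃₀ {s ∈ P₂ | s ⊆ p'} = p' := by
    apply Subset.antisymm
    · exact sUnion_subset fun s hs => hs.2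
    · intro x hx
      obtain ⟨q, ⟨hq1, hqp⟩, hxq⟩ := hx
      exact ⟨q, ⟨hSsub q hq1 hqp, subset_sUnion_of_mem ⟨hq1, hqp⟩⟩, hxq⟩
  by_cases hA : ∃ s ∈ P₂, ¬ s ⊆ p'
  · have hmem := regular_key α P₂ h₂ p' hp'c hA
    rw [← hrecp] at hmem
    exact hpN hmem
  · push_neg at hA
    have hr'c : ⋃₀ {s ∈ P₁ | s ⊆ r'} = r' := by
      apply Subset.antisymm
      · exact sUnion_subset fun s hs => hs.2
      · intro x hx
        obtain ⟨q, ⟨hq1, hqr⟩, hxq⟩ := hx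
        exact ⟨q, ⟨hTsub q hq1 hqr, subset_sUnion_of_mem ⟨hq1, hqr⟩⟩, hxq⟩
    have hpr' : ¬ p ⊆ r' := by
      intro h
      have hr'r : r' ⊆ r := sUnion_subset fun s hs => hs.2.1
      have hrp' : r ⊆ p' := hA r hrP
      have hp'p : p' ⊆ p := sUnion_subset fun s hs => hs.2.1
      have hpr : p = r := Subset.antisymm (h.trans hr'r) (hrp'.trans hp'p)
      exact hpN (hpr ▸ hrP)
    have hmem := regular_key α P₁ h₁ r' hr'c ⟨p, hpP, hpr'⟩
    rw [← hrecr] at hmem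
    exact hrN hmem
end

section
/- The union Q of all regular families of subsets of A is itself a regular family. -/
open Set

variable {A : Type*}

lemma regular_induction {α : Set A → A} {P : Set (Set A)}
    (hP : RegularFamily α P) (Φ : Set A → Prop)
    (h : ∀ p ∈ P, (∀ q ∈ P, q ⊂ p → Φ q) → Φ p) : ∀ p ∈ P, Φ p := by
  by_contra hc
  push_neg at hc
  obtain ⟨p, hpP, hp⟩ := hc
  obtain ⟨m, ⟨hmP, hm⟩, hmin⟩ := hP.2.1 {p ∈ P | ¬ Φ p} (fun x hx => hx.1) ⟨p, hpP, hp⟩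
  refine hm (h m hmP (fun q hq hqm => ?_))
  by_contra hq'
  exact hqm.not_subset (hmin q ⟨hq, hq'⟩)

lemma regular_key_s4 {α : Set A → A} {P P' : Set (Set A)}
    (hP : RegularFamily α P) (hP' : RegularFamily α P') :
    ∀ p ∈ P, ∀ p' ∈ P', (p ⊂ p' ∧ p ∈ P') ∨ p = p' ∨ (p' ⊂ p ∧ p' ∈ P) := by
  refine regular_induction hP _ ?_
  intro p hpP ih
  refine regular_induction hP' _ ?_
  intro p' hp'P' ih'
  by_contra hcon
  -- facts about strict subsets of p'
  have fact1 : ∀ q' ∈ P', q' ⊂ p' → q' ⊂ p ∧ q' ∈ P := by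
    intro q' hq' hss
    rcases ih' q' hq' hss with ⟨h1, h2⟩ | h1 | h1
    · exact absurd (Or.inl ⟨h1.trans hss, h2⟩) hcon
    · exact absurd (Or.inl ⟨h1 ▸ hss, h1 ▸ hq'⟩) hcon
    · exact h1
  have fact2 : ∀ q ∈ P, q ⊂ p → q ⊂ p' ∧ q ∈ P' := by
    intro q hq hss
    rcases ih q hq hss p' hp'P' with h1 | h1 | ⟨h1, h2⟩
    · exact h1
    · exact absurd (Or.inr (Or.inr ⟨h1 ▸ hss, h1 ▸ hq⟩)) hcon
    · exact absurd (Or.inr (Or.inr ⟨h1.trans hss, h2⟩)) hcon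
  have hpne : p ≠ ∅ := by
    intro he
    by_cases he' : p' = ∅
    · exact hcon (Or.inr (Or.inl (he.trans he'.symm)))
    · refine hcon (Or.inl ⟨?_, he ▸ hP'.2.2.1⟩)
      rw [he]
      exact Set.empty_ssubset.mpr (Set.nonempty_iff_ne_empty.mpr he')
  have hp'ne : p' ≠ ∅ := by
    intro he
    refine hcon (Or.inr (Or.inr ⟨?_, he ▸ hP.2.2.1⟩))
    rw [he]
    exact Set.empty_ssubset.mpr (Set.nonempty_iff_ne_empty.mpr hpne)
  have hsets : {q ∈ P | q ⊂ p} = {q' ∈ P' | q' ⊂ p'} := by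
    ext q
    constructor
    · rintro ⟨h1, h2⟩
      exact ⟨(fact2 q h1 h2).2, (fact2 q h1 h2).1⟩
    · rintro ⟨h1, h2⟩
      exact ⟨(fact1 q h1 h2).2, (fact1 q h1 h2).1⟩
  have e1 := hP.2.2.2 p hpP (Set.nonempty_iff_ne_empty.mpr hpne)
  have e2 := hP'.2.2.2 p' hp'P' (Set.nonempty_iff_ne_empty.mpr hp'ne)
  rw [hsets] at e1
  exact hcon (Or.inr (Or.inl (e1.trans e2.symm)))

lemma regular_singleton_empty (α : Set A → A) : RegularFamily α {(∅ : Set A)} := by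
  refine ⟨?_, ?_, rfl, ?_⟩
  · rintro p rfl q rfl; exact Or.inl le_rfl
  · rintro γ hγ ⟨x, hx⟩
    have hx0 : x = ∅ := hγ hx
    exact ⟨x, hx, fun y _ => hx0 ▸ Set.empty_subset y⟩
  · rintro p rfl hne
    exact absurd rfl (Set.nonempty_iff_ne_empty.mp hne)

theorem union_of_regulars_regular
    (φ : Set A → A) (hφ : ∀ X : Set A, X.Nonempty → φ X ∈ X)
    (α : Set A → A) (hα : ∀ X : Set A, α X = φ Xᶜ) :
    RegularFamily α {p : Set A | ∃ P : Set (Set A), RegularFamily α P ∧ p ∈ P} := by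
  set Q : Set (Set A) := {p : Set A | ∃ P : Set (Set A), RegularFamily α P ∧ p ∈ P} with hQ
  refine ⟨?_, ?_, ?_, ?_⟩
  · rintro p ⟨P, hP, hpP⟩ q ⟨P', hP', hqP'⟩
    rcases regular_key_s4 hP hP' p hpP q hqP' with h | h | h
    · exact Or.inl h.1.subset
    · exact Or.inl h.le
    · exact Or.inr h.1.subset
  · rintro γ hγ ⟨x, hxγ⟩
    obtain ⟨P, hP, hxP⟩ := hγ hxγ
    obtain ⟨m, ⟨hmP, hmγ, hmx⟩, hmin⟩ :=
      hP.2.1 {y ∈ P | y ∈ γ ∧ y ⊆ x} (fun y hy => hy.1) ⟨x, hxP, hxγ, le_rfl⟩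
    refine ⟨m, hmγ, fun y hy => ?_⟩
    obtain ⟨P', hP', hyP'⟩ := hγ hy
    rcases regular_key_s4 hP' hP y hyP' x hxP with h | h | h
    · exact hmin y ⟨h.2, hy, h.1.subset⟩
    · exact h ▸ (hmin y ⟨h ▸ hxP, hy, h.le⟩)
    · exact hmx.trans h.1.subset
  · exact ⟨{∅}, regular_singleton_empty α, rfl⟩
  · rintro p ⟨P, hP, hpP⟩ hne
    have hsets : {q ∈ Q | q ⊂ p} = {q ∈ P | q ⊂ p} := by
      ext q
      constructor
      · rintro ⟨⟨P', hP', hqP'⟩, h2⟩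
        rcases regular_key_s4 hP' hP q hqP' p hpP with h | h | h
        · exact ⟨h.2, h2⟩
        · exact absurd h h2.ne
        · exact absurd (h.1.trans h2) (lt_irrefl p)
      · rintro ⟨h1, h2⟩
        exact ⟨⟨P, hP, h1⟩, h2⟩
    rw [hsets]
    exact hP.2.2.2 p hpP hne
end

section
/- The union of all sets belonging to Q, the union of all regular families of subsets of A, equals A itself: ⋃Q = A. -/
open Set

variable {A : Type*}

universe u

/-- Transfinite iteration of `α`: `zg α o` is the union over `o' < o` of
`insert (α (zg α o')) (zg α o')`. -/
noncomputable def zg {A : Type u} (α : Set A → A) : Ordinal.{u} → Set A :=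
  Ordinal.lt_wf.fix fun o ih => ⋃ o' : {x // x < o}, insert (α (ih o' o'.2)) (ih o' o'.2)

/-- Successor step. -/
noncomputable def zf {A : Type u} (α : Set A → A) (o : Ordinal.{u}) : Set A :=
  insert (α (zg α o)) (zg α o)

lemma zg_eq {A : Type u} (α : Set A → A) (o : Ordinal.{u}) :
    zg α o = ⋃ o' : {x // x < o}, zf α o' := by
  unfold zg zf
  exact Ordinal.lt_wf.fix_eq _ o

lemma zf_subset_zg {A : Type u} (α : Set A → A) {o' o : Ordinal.{u}} (h : o' < o) :
    zf α o' ⊆ zg α o := by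
  rw [zg_eq]
  exact subset_iUnion (fun x : {x // x < o} => zf α x) ⟨o', h⟩

lemma zg_subset_zf {A : Type u} (α : Set A → A) (o : Ordinal.{u}) :
    zg α o ⊆ zf α o := subset_insert _ _

lemma zg_mono {A : Type u} (α : Set A → A) {o₁ o₂ : Ordinal.{u}} (h : o₁ ≤ o₂) :
    zg α o₁ ⊆ zg α o₂ := by
  rw [zg_eq α o₁]
  exact iUnion_subset fun o' => zf_subset_zg α (lt_of_lt_of_le o'.2 h)

lemma zf_mono {A : Type u} (α : Set A → A) {o₁ o₂ : Ordinal.{u}} (h : o₁ ≤ o₂) :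
    zf α o₁ ⊆ zf α o₂ := by
  rcases h.lt_or_eq with h | rfl
  · exact (zf_subset_zg α h).trans (zg_subset_zf α o₂)
  · exact subset_rfl

theorem sUnion_maximal_regular_eq_univ
    (φ : Set A → A) (hφ : ∀ X : Set A, X.Nonempty → φ X ∈ X)
    (α : Set A → A) (hα : ∀ X : Set A, α X = φ Xᶜ) :
    ⋃₀ {p : Set A | ∃ P : Set (Set A), RegularFamily α P ∧ p ∈ P} = Set.univ := by
  -- if `X ≠ univ` then `α X ∉ X`
  have key : ∀ X : Set A, X ≠ univ → α X ∉ X := by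
    intro X hX
    have h1 : Xᶜ.Nonempty := by
      rw [nonempty_compl]; exact hX
    have h2 := hφ _ h1
    rw [hα]
    exact h2
  -- there exists an ordinal with `zg α o = univ`
  have hexists : ∃ o : Ordinal.{_}, zg α o = univ := by
    by_contra h
    push_neg at h
    apply not_injective_of_ordinal (fun o => α (zg α o))
    intro o₁ o₂ heq
    by_contra hne
    wlog hlt : o₁ < o₂ generalizing o₁ o₂
    · exact this heq.symm (Ne.symm hne) (lt_of_le_of_ne (not_lt.mp hlt) (Ne.symm hne))
    have h1 : α (zg α o₁) ∈ zg α o₂ :=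
      zf_subset_zg α hlt (mem_insert _ _)
    have h2 : α (zg α o₂) ∉ zg α o₂ := key _ (h o₂)
    simp only [] at heq
    rw [heq] at h1
    exact h2 h1
  -- least such ordinal
  set o₀ := Ordinal.lt_wf.min {o | zg α o = univ} hexists with ho₀
  have ho₀univ : zg α o₀ = univ := Ordinal.lt_wf.min_mem _ hexists
  have hlt_ne : ∀ o < o₀, zg α o ≠ univ := fun o ho h =>
    Ordinal.lt_wf.not_lt_min _ h ho
  have hnotmem : ∀ o < o₀, α (zg α o) ∉ zg α o := fun o ho => key _ (hlt_ne o ho)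
  -- the canonical regular family
  set P : Set (Set A) := insert ∅ {p | ∃ o < o₀, p = zf α o} with hP
  have hzfP : ∀ o < o₀, zf α o ∈ P := fun o ho => Or.inr ⟨o, ho, rfl⟩
  -- strict inclusion zf o' ⊂ zf o for o' < o < o₀
  have hssub : ∀ o' o, o' < o → o < o₀ → zf α o' ⊂ zf α o := by
    intro o' o hlt ho
    refine ⟨(zf_subset_zg α hlt).trans (zg_subset_zf α o), fun hsub => ?_⟩
    have : α (zg α o) ∈ zf α o' := hsub (mem_insert _ _)
    have : α (zg α o) ∈ zg α o := zf_subset_zg α hlt this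
    exact hnotmem o ho this
  have hreg : RegularFamily α P := by
    refine ⟨?_, ?_, mem_insert _ _, ?_⟩
    · -- chain
      rintro p hp q hq
      rcases hp with rfl | ⟨o₁, ho₁, rfl⟩
      · exact Or.inl (empty_subset _)
      rcases hq with rfl | ⟨o₂, ho₂, rfl⟩
      · exact Or.inr (empty_subset _)
      rcases le_total o₁ o₂ with h | h
      · exact Or.inl (zf_mono α h)
      · exact Or.inr (zf_mono α h)
    · -- least element
      intro γ hγP hγne
      by_cases hemp : ∅ ∈ γ
      · exact ⟨∅, hemp, fun x _ => empty_subset x⟩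
      · have hS : {o : Ordinal | zf α o ∈ γ}.Nonempty := by
          obtain ⟨x, hx⟩ := hγne
          rcases hγP hx with rfl | ⟨o, _, rfl⟩
          · exact absurd hx hemp
          · exact ⟨o, hx⟩
        set m := Ordinal.lt_wf.min _ hS with hm
        have hmmem : zf α m ∈ γ := Ordinal.lt_wf.min_mem _ hS
        refine ⟨zf α m, hmmem, fun x hx => ?_⟩
        rcases hγP hx with rfl | ⟨o, _, rfl⟩
        · exact absurd hx hemp
        · have : ¬ o < m := Ordinal.lt_wf.not_lt_min _ hx
          exact zf_mono α (not_lt.mp this)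
    · -- reconstruction
      rintro p hp hpne
      rcases hp with rfl | ⟨o, ho, rfl⟩
      · exact absurd rfl hpne.ne_empty
      have hseg : ⋃₀ {q ∈ P | q ⊂ zf α o} = zg α o := by
        apply Subset.antisymm
        · apply sUnion_subset
          rintro q ⟨hq, hqsub⟩
          rcases hq with rfl | ⟨o', ho', rfl⟩
          · exact empty_subset _
          rcases lt_or_ge o' o with h | h
          · exact zf_subset_zg α h
          · exact absurd (hqsub.trans_subset (zf_mono α h)) (ssubset_irrefl _)
        · rw [zg_eq α o]
          apply iUnion_subset
          rintro ⟨o', ho'⟩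
          have ho'lt : o' < o₀ := ho'.trans ho
          exact subset_sUnion_of_mem ⟨hzfP o' ho'lt, hssub o' o ho' ho⟩
      rw [hseg, union_singleton]
      rfl
  -- conclude
  apply Subset.antisymm (subset_univ _)
  rw [← ho₀univ, zg_eq α o₀]
  apply iUnion_subset
  rintro ⟨o, ho⟩
  exact subset_sUnion_of_mem ⟨P, hreg, hzfP o ho⟩
end

section
/- Given the maximal regular family Q on A, for each a ∈ A let r(a) be the least element of {q ∈ Q : a ∈ q}; then the relation a ≤ b defined by r(a) ⊆ r(b) is a well-order on A. -/
open Set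

variable {A : Type*}

/-- Comparability/coherence predicate. -/
def ZGood (P P' : Set (Set A)) (p q : Set A) : Prop :=
  (p ⊆ q ∨ q ⊆ p) ∧ (p ⊂ q → p ∈ P') ∧ (q ⊂ p → q ∈ P)

lemma zkey {α : Set A → A} {P P' : Set (Set A)}
    (hP : RegularFamily α P) (hP' : RegularFamily α P') :
    ∀ p ∈ P, ∀ q ∈ P', ZGood P P' p q := by
  by_contra h
  push_neg at h
  obtain ⟨p₁, hp₁P, q₁, hq₁P', hbad⟩ := h
  obtain ⟨p₀, hp₀B, hp₀min⟩ := hP.2.1 {p ∈ P | ∃ q ∈ P', ¬ ZGood P P' p q}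
    (sep_subset _ _) ⟨p₁, hp₁P, q₁, hq₁P', hbad⟩
  obtain ⟨hp₀P, hq⟩ := hp₀B
  obtain ⟨q₀, hq₀B, hq₀min⟩ := hP'.2.1 {q ∈ P' | ¬ ZGood P P' p₀ q}
    (sep_subset _ _) hq
  obtain ⟨hq₀P', hnG⟩ := hq₀B
  have H1 : ∀ p ∈ P, p ⊂ p₀ → ZGood P P' p q₀ := by
    intro p hp hlt
    by_contra hn
    exact hlt.not_subset (hp₀min p ⟨hp, q₀, hq₀P', hn⟩)
  have H2 : ∀ q ∈ P', q ⊂ q₀ → ZGood P P' p₀ q := by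
    intro q hqm hlt
    by_contra hn
    exact hlt.not_subset (hq₀min q ⟨hqm, hn⟩)
  have hp₀ne : p₀.Nonempty := by
    rcases eq_empty_or_nonempty p₀ with he | hne
    · subst he
      exact absurd ⟨Or.inl (empty_subset _), fun _ => hP'.2.2.1,
        fun h => (h.2 (empty_subset _)).elim⟩ hnG
    · exact hne
  have hq₀ne : q₀.Nonempty := by
    rcases eq_empty_or_nonempty q₀ with he | hne
    · subst he
      exact absurd ⟨Or.inr (empty_subset _),
        fun h => (h.2 (empty_subset _)).elim, fun _ => hP.2.2.1⟩ hnG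
    · exact hne
  have hrepP : p₀ = (⋃₀ {q ∈ P | q ⊂ p₀}) ∪ {α (⋃₀ {q ∈ P | q ⊂ p₀})} :=
    hP.2.2.2 p₀ hp₀P hp₀ne
  have hrepP' : q₀ = (⋃₀ {q ∈ P' | q ⊂ q₀}) ∪ {α (⋃₀ {q ∈ P' | q ⊂ q₀})} :=
    hP'.2.2.2 q₀ hq₀P' hq₀ne
  by_cases hc : ∃ p, p ∈ P ∧ p ⊂ p₀ ∧ q₀ ⊆ p
  · obtain ⟨p, hpP, hplt, hq₀p⟩ := hc
    apply hnG
    refine ⟨Or.inr (hq₀p.trans hplt.subset), ?_, ?_⟩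
    · intro h
      exact absurd (h.trans_subset (hq₀p.trans hplt.subset)) (ssubset_irrefl _)
    · intro _
      rcases hq₀p.ssubset_or_eq with h' | h'
      · exact (H1 p hpP hplt).2.2 h'
      · exact h' ▸ hpP
  · by_cases hc' : ∃ q, q ∈ P' ∧ q ⊂ q₀ ∧ p₀ ⊆ q
    · obtain ⟨q, hqP', hqlt, hp₀q⟩ := hc'
      apply hnG
      refine ⟨Or.inl (hp₀q.trans hqlt.subset), ?_, ?_⟩
      · intro _
        rcases hp₀q.ssubset_or_eq with h' | h'
        · exact (H2 q hqP' hqlt).2.1 h'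
        · exact h' ▸ hqP'
      · intro h
        exact absurd (h.trans_subset (hp₀q.trans hqlt.subset)) (ssubset_irrefl _)
    · push_neg at hc hc'
      have hsub1 : ∀ p, p ∈ P → p ⊂ p₀ → p ∈ P' ∧ p ⊂ q₀ := by
        intro p hp hlt
        have hG := H1 p hp hlt
        have hpq : p ⊆ q₀ := hG.1.resolve_right (hc p hp hlt)
        have hne : p ≠ q₀ := fun h => hc p hp hlt (h ▸ Subset.rfl)
        have hss : p ⊂ q₀ := hpq.ssubset_of_ne hne
        exact ⟨hG.2.1 hss, hss⟩
      have hsub2 : ∀ q, q ∈ P' → q ⊂ q₀ → q ∈ P ∧ q ⊂ p₀ := by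
        intro q hqm hlt
        have hG := H2 q hqm hlt
        have hqp : q ⊆ p₀ := hG.1.resolve_left (hc' q hqm hlt)
        have hne : q ≠ p₀ := fun h => hc' q hqm hlt (h ▸ Subset.rfl)
        have hss : q ⊂ p₀ := hqp.ssubset_of_ne hne
        exact ⟨hG.2.2 hss, hss⟩
      have hset : {q ∈ P | q ⊂ p₀} = {q ∈ P' | q ⊂ q₀} := by
        ext x
        constructor
        · rintro ⟨hx1, hx2⟩
          obtain ⟨h1, h2⟩ := hsub1 x hx1 hx2
          exact ⟨h1, h2⟩
        · rintro ⟨hx1, hx2⟩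
          obtain ⟨h1, h2⟩ := hsub2 x hx1 hx2
          exact ⟨h1, h2⟩
      have heq : p₀ = q₀ := by rw [hrepP, hrepP', hset]
      exact hnG ⟨Or.inl heq.subset, fun h => (h.ne heq).elim, fun h => (h.ne heq.symm).elim⟩

lemma zQreg {α : Set A → A} {Q : Set (Set A)}
    (hQdef : Q = {p : Set A | ∃ P : Set (Set A), RegularFamily α P ∧ p ∈ P}) :
    RegularFamily α Q := by
  have hmem : ∀ p ∈ Q, ∃ P, RegularFamily α P ∧ p ∈ P := by
    intro p hp; rwa [hQdef] at hp
  have hmem' : ∀ (P : Set (Set A)), RegularFamily α P → P ⊆ Q := by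
    intro P hP p hp; rw [hQdef]; exact ⟨P, hP, hp⟩
  refine ⟨?_, ?_, ?_, ?_⟩
  · intro p hp q hq
    obtain ⟨P, hP, hpP⟩ := hmem p hp
    obtain ⟨P', hP', hqP'⟩ := hmem q hq
    exact (zkey hP hP' p hpP q hqP').1
  · rintro γ hγ ⟨p₀, hp₀⟩
    obtain ⟨P, hP, hp₀P⟩ := hmem p₀ (hγ hp₀)
    have hsub : {x ∈ γ | x ⊆ p₀} ⊆ P := by
      rintro x ⟨hxγ, hxp⟩
      obtain ⟨P', hP', hxP'⟩ := hmem x (hγ hxγ)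
      rcases hxp.ssubset_or_eq with h | h
      · exact (zkey hP hP' p₀ hp₀P x hxP').2.2 h
      · exact h ▸ hp₀P
    obtain ⟨m, ⟨hmγ, hmp⟩, hmin⟩ := hP.2.1 _ hsub ⟨p₀, hp₀, Subset.rfl⟩
    refine ⟨m, hmγ, ?_⟩
    intro x hx
    obtain ⟨P', hP', hxP'⟩ := hmem x (hγ hx)
    rcases (zkey hP' hP x hxP' p₀ hp₀P).1 with h | h
    · exact hmin x ⟨hx, h⟩
    · exact hmp.trans h
  · rw [hQdef]
    refine ⟨{∅}, ⟨?_, ?_, mem_singleton _, ?_⟩, mem_singleton _⟩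
    · intro p hp q hq
      rw [mem_singleton_iff] at hp hq
      subst hp; subst hq; exact Or.inl Subset.rfl
    · rintro γ hγ ⟨x, hx⟩
      refine ⟨x, hx, fun y hy => ?_⟩
      have h1 := hγ hx; have h2 := hγ hy
      rw [mem_singleton_iff] at h1 h2
      rw [h1, h2]
    · intro p hp hpne
      rw [mem_singleton_iff] at hp
      exact absurd hp hpne.ne_empty
  · intro p hp hpne
    obtain ⟨P, hP, hpP⟩ := hmem p hp
    have hset : {q ∈ Q | q ⊂ p} = {q ∈ P | q ⊂ p} := by
      ext x
      constructor
      · rintro ⟨hxQ, hxp⟩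
        obtain ⟨P', hP', hxP'⟩ := hmem x hxQ
        exact ⟨(zkey hP hP' p hpP x hxP').2.2 hxp, hxp⟩
      · rintro ⟨hxP, hxp⟩
        exact ⟨hmem' P hP hxP, hxp⟩
    rw [hset]
    exact hP.2.2.2 p hpP hpne

theorem induced_relation_well_orders
    (φ : Set A → A) (hφ : ∀ X : Set A, X.Nonempty → φ X ∈ X)
    (α : Set A → A) (hα : ∀ X : Set A, α X = φ Xᶜ)
    (Q : Set (Set A)) (hQdef : Q = {p : Set A | ∃ P : Set (Set A), RegularFamily α P ∧ p ∈ P})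
    (r : A → Set A)
    (hr : ∀ a : A, r a ∈ Q ∧ a ∈ r a ∧ ∀ q ∈ Q, a ∈ q → r a ⊆ q) :
    IsLinearOrder A (fun a b => r a ⊆ r b) ∧
      ∀ S : Set A, S.Nonempty → ∃ m ∈ S, ∀ x ∈ S, r m ⊆ r x := by
  have hQreg : RegularFamily α Q := zQreg hQdef
  have total : ∀ a b : A, r a ⊆ r b ∨ r b ⊆ r a := fun a b =>
    hQreg.1 (r a) (hr a).1 (r b) (hr b).1
  have antisymm : ∀ a b : A, r a ⊆ r b → r b ⊆ r a → a = b := by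
    intro a b h1 h2
    have hEq : r a = r b := Subset.antisymm h1 h2
    have hpne : (r a).Nonempty := ⟨a, (hr a).2.1⟩
    have hrep := hQreg.2.2.2 (r a) (hr a).1 hpne
    have key : ∀ c : A, c ∈ r a → r a ⊆ r c → c = α (⋃₀ {q ∈ Q | q ⊂ r a}) := by
      intro c hc hsub
      have hmem : c ∈ (⋃₀ {q ∈ Q | q ⊂ r a}) ∪ {α (⋃₀ {q ∈ Q | q ⊂ r a})} := hrep ▸ hc
      rcases hmem with h | h
      · obtain ⟨q, ⟨hqQ, hqlt⟩, hcq⟩ := h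
        exact absurd (hsub.trans ((hr c).2.2 q hqQ hcq)) hqlt.not_subset
      · exact mem_singleton_iff.mp h
    have ha := key a (hr a).2.1 Subset.rfl
    have hb := key b (by rw [hEq]; exact (hr b).2.1) h1
    rw [ha, hb]
  constructor
  · exact { refl := fun a => Subset.rfl,
            trans := fun a b c hab hbc => hab.trans hbc,
            antisymm := antisymm,
            total := total }
  · rintro S ⟨s, hs⟩
    obtain ⟨m', hm', hmin⟩ := hQreg.2.1 (r '' S)
      (by rintro x ⟨y, _, rfl⟩; exact (hr y).1) ⟨r s, ⟨s, hs, rfl⟩⟩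
    obtain ⟨m, hmS, rfl⟩ := hm'
    exact ⟨m, hmS, fun x hx => hmin (r x) ⟨x, hx, rfl⟩⟩
end

section
/- If Q is the union of all regular families of subsets of A and Z = ⋃Q ≠ A, then Q ∪ {Z ∪ {α(Z)}} is a regular family strictly containing Q — a contradiction; hence ⋃Q = A. -/
open Set

variable {A : Type*}

lemma sandwich_eq {s t : Set A} {a : A} (h1 : t ⊆ s) (h2 : s ⊆ t ∪ {a}) (h3 : ¬ s ⊆ t) :
    s = t ∪ {a} := by
  obtain ⟨x, hxs, hxt⟩ := not_subset.1 h3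
  have hxa : x = a := by
    rcases h2 hxs with h | h
    · exact absurd h hxt
    · exact h
  apply subset_antisymm h2
  rintro y (hy | hy)
  · exact h1 hy
  · rw [mem_singleton_iff] at hy; subst hy; rwa [hxa] at hxs

lemma crossComp {α : Set A → A} {P P' : Set (Set A)}
    (hP : RegularFamily α P) (hP' : RegularFamily α P') :
    ∀ p ∈ P, ∀ q ∈ P', p ⊆ q ∨ q ⊆ p := by
  by_contra hcon
  push_neg at hcon
  obtain ⟨p, hpP, q, hqP, hpq1, hpq2⟩ := hcon
  obtain ⟨p₀, hp₀S, hp₀min⟩ := hP.2.1 {x ∈ P | ∃ y ∈ P', ¬ x ⊆ y ∧ ¬ y ⊆ x}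
    (sep_subset _ _) ⟨p, hpP, q, hqP, hpq1, hpq2⟩
  obtain ⟨hp₀P, q', hq'P', _, _⟩ := hp₀S
  obtain ⟨q₀, hq₀T, hq₀min⟩ := hP'.2.1 {y ∈ P' | ¬ p₀ ⊆ y ∧ ¬ y ⊆ p₀}
    (sep_subset _ _) ⟨q', hq'P', ‹¬ p₀ ⊆ q'›, ‹¬ q' ⊆ p₀›⟩
  obtain ⟨hq₀P', hnpq, hnqp⟩ := hq₀T
  -- comparability facts from minimality
  have hcompP : ∀ s ∈ P, s ⊂ p₀ → ∀ y ∈ P', s ⊆ y ∨ y ⊆ s := by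
    intro s hs hss y hy
    by_contra hc
    push_neg at hc
    exact hss.2 (hp₀min s ⟨hs, y, hy, hc.1, hc.2⟩)
  have hcompQ : ∀ y ∈ P', y ⊂ q₀ → y ⊆ p₀ := by
    intro y hy hyss
    by_cases h1 : p₀ ⊆ y
    · exact absurd (h1.trans hyss.1) hnpq
    · by_contra h2
      exact hyss.2 (hq₀min y ⟨hy, h1, h2⟩)
  have hp₀ne : p₀.Nonempty := by
    rw [nonempty_iff_ne_empty]
    rintro rfl
    exact hnpq (empty_subset _)
  have hq₀ne : q₀.Nonempty := by
    rw [nonempty_iff_ne_empty]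
    rintro rfl
    exact hnqp (empty_subset _)
  set P1 := ⋃₀ {s ∈ P | s ⊂ p₀} with hP1
  set Q1 := ⋃₀ {y ∈ P' | y ⊂ q₀} with hQ1
  have hp₀eq : p₀ = P1 ∪ {α P1} := hP.2.2.2 p₀ hp₀P hp₀ne
  have hq₀eq : q₀ = Q1 ∪ {α Q1} := hP'.2.2.2 q₀ hq₀P' hq₀ne
  -- key 1 : Q1 ⊆ P1
  have key1 : ∀ y ∈ P', y ⊂ q₀ → y ⊆ P1 := by
    intro y hy hyss
    by_contra hnot
    have hP1y : P1 ⊆ y := by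
      apply sUnion_subset
      rintro s ⟨hsP, hsp₀⟩
      rcases hcompP s hsP hsp₀ y hy with h | h
      · exact h
      · exact absurd (h.trans (subset_sUnion_of_mem (show s ∈ {s ∈ P | s ⊂ p₀} from ⟨hsP, hsp₀⟩))) hnot
    have hyp₀ : y ⊆ p₀ := hcompQ y hy hyss
    have : y = P1 ∪ {α P1} := sandwich_eq hP1y (hp₀eq ▸ hyp₀) hnot
    rw [← hp₀eq] at this
    subst this
    exact hnpq hyss.1
  have hQ1P1 : Q1 ⊆ P1 := sUnion_subset fun y hy => key1 y hy.1 hy.2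
  -- key 2 : P1 ⊆ Q1
  have key2 : ∀ s ∈ P, s ⊂ p₀ → s ⊆ Q1 := by
    intro s hsP hss
    by_contra hnot
    have hQ1s : Q1 ⊆ s := by
      apply sUnion_subset
      rintro y ⟨hyP', hyq₀⟩
      rcases hcompP s hsP hss y hyP' with h | h
      · exact absurd (h.trans (subset_sUnion_of_mem (show y ∈ {y ∈ P' | y ⊂ q₀} from ⟨hyP', hyq₀⟩))) hnot
      · exact h
    have hsq₀ : s ⊆ q₀ := by
      rcases hcompP s hsP hss q₀ hq₀P' with h | h
      · exact h
      · exact absurd (h.trans hss.1) hnqp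
    have : s = Q1 ∪ {α Q1} := sandwich_eq hQ1s (hq₀eq ▸ hsq₀) hnot
    rw [← hq₀eq] at this
    subst this
    exact hnqp hss.1
  have hP1Q1 : P1 ⊆ Q1 := sUnion_subset fun s hs => key2 s hs.1 hs.2
  have : P1 = Q1 := subset_antisymm hP1Q1 hQ1P1
  rw [hp₀eq, this, ← hq₀eq] at hnpq
  exact hnpq (Subset.refl _)

lemma absorb {α : Set A → A} (hfresh : ∀ X : Set A, X ≠ univ → α X ∉ X)
    {P P' : Set (Set A)} (hP : RegularFamily α P) (hP' : RegularFamily α P') :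
    ∀ r ∈ P', (∃ p ∈ P, r ⊂ p) → r ∈ P := by
  by_contra hcon
  push_neg at hcon
  obtain ⟨r', hr'P', hr'ex, hr'nP⟩ := hcon
  obtain ⟨r₀, hr₀D, hr₀min⟩ := hP'.2.1 {r ∈ P' | (∃ p ∈ P, r ⊂ p) ∧ r ∉ P}
    (sep_subset _ _) ⟨r', hr'P', hr'ex, hr'nP⟩
  obtain ⟨hr₀P', ⟨pw, hpwP, hr₀pw⟩, hr₀nP⟩ := hr₀D
  -- members of P' strictly below r₀ lie in P
  have hdown : ∀ q ∈ P', q ⊂ r₀ → q ∈ P := by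
    intro q hq hqss
    by_contra hqnP
    exact hqss.2 (hr₀min q ⟨hq, ⟨pw, hpwP, hqss.trans hr₀pw⟩, hqnP⟩)
  -- least p₀ ∈ P with r₀ ⊂ p₀
  obtain ⟨p₀, hp₀E, hp₀min⟩ := hP.2.1 {p ∈ P | r₀ ⊂ p} (sep_subset _ _) ⟨pw, hpwP, hr₀pw⟩
  obtain ⟨hp₀P, hr₀p₀⟩ := hp₀E
  have hsub : ∀ s ∈ P, s ⊂ p₀ → s ⊆ r₀ := by
    intro s hsP hss
    rcases crossComp hP hP' s hsP r₀ hr₀P' with h | h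
    · exact h
    · have : r₀ ⊂ s := ssubset_of_subset_of_ne h (by rintro rfl; exact hr₀nP hsP)
      exact absurd (hp₀min s ⟨hsP, this⟩) hss.2
  have hp₀ne : p₀.Nonempty := by
    obtain ⟨x, hx, -⟩ := exists_of_ssubset hr₀p₀
    exact ⟨x, hx⟩
  set P1 := ⋃₀ {s ∈ P | s ⊂ p₀} with hP1def
  have hp₀eq : p₀ = P1 ∪ {α P1} := hP.2.2.2 p₀ hp₀P hp₀ne
  have hP1r₀ : P1 ⊆ r₀ := sUnion_subset fun s hs => hsub s hs.1 hs.2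
  -- r₀ = P1
  have hr₀P1 : r₀ = P1 := by
    by_contra hne
    have h3 : ¬ r₀ ⊆ P1 := fun h => hne (subset_antisymm h hP1r₀)
    have := sandwich_eq hP1r₀ (hp₀eq ▸ hr₀p₀.1) h3
    rw [← hp₀eq] at this
    exact hr₀p₀.2 this.ge
  -- r₀ nonempty, successor form in P'
  have hr₀ne : r₀.Nonempty := by
    rw [nonempty_iff_ne_empty]
    rintro rfl
    exact hr₀nP hP.2.2.1
  set R1 := ⋃₀ {q ∈ P' | q ⊂ r₀} with hR1def
  have hr₀eq : r₀ = R1 ∪ {α R1} := hP'.2.2.2 r₀ hr₀P' hr₀ne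
  have hR1ne : R1 ≠ univ := by
    intro h
    obtain ⟨x, hxp₀, hxr₀⟩ := exists_of_ssubset hr₀p₀
    have : R1 ⊆ r₀ := sUnion_subset fun q hq => hq.2.1
    exact hxr₀ (this (h ▸ mem_univ x))
  have hαR1 : α R1 ∉ R1 := hfresh R1 hR1ne
  have hαmem : α R1 ∈ P1 := by
    rw [← hr₀P1, hr₀eq]
    exact mem_union_right _ rfl
  obtain ⟨s, hs, hαs⟩ := hαmem
  obtain ⟨hsP, hsp₀⟩ := hs
  have hsR1 : ¬ s ⊆ R1 := fun h => hαR1 (h hαs)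
  have hR1s : R1 ⊆ s := by
    apply sUnion_subset
    rintro q ⟨hqP', hqr₀⟩
    have hqP : q ∈ P := hdown q hqP' hqr₀
    rcases hP.1 q hqP s hsP with h | h
    · exact h
    · exact absurd (h.trans (subset_sUnion_of_mem
        (show q ∈ {q ∈ P' | q ⊂ r₀} from ⟨hqP', hqr₀⟩))) hsR1
  have hsr₀ : s ⊆ r₀ := hsub s hsP hsp₀
  have := sandwich_eq hR1s (hr₀eq ▸ hsr₀) hsR1
  rw [← hr₀eq] at this
  subst this
  exact hr₀nP hsP

theorem extend_or_cover
    (φ : Set A → A) (hφ : ∀ X : Set A, X.Nonempty → φ X ∈ X)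
    (α : Set A → A) (hα : ∀ X : Set A, α X = φ Xᶜ)
    (Q : Set (Set A)) (hQdef : Q = {p : Set A | ∃ P : Set (Set A), RegularFamily α P ∧ p ∈ P}) :
    (⋃₀ Q ≠ Set.univ →
      RegularFamily α (Q ∪ {(⋃₀ Q) ∪ {α (⋃₀ Q)}}) ∧
      Q ⊂ Q ∪ {(⋃₀ Q) ∪ {α (⋃₀ Q)}}) ∧
    ⋃₀ Q = Set.univ := by
  have hfresh : ∀ X : Set A, X ≠ univ → α X ∉ X := by
    intro X hX hmem
    have h := hφ Xᶜ (nonempty_compl.2 hX)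
    rw [← hα] at h
    exact h hmem
  have hQmem : ∀ p ∈ Q, ∃ P : Set (Set A), RegularFamily α P ∧ p ∈ P := by
    rw [hQdef]; exact fun p hp => hp
  have hQback : ∀ P : Set (Set A), RegularFamily α P → ∀ p ∈ P, p ∈ Q := by
    rw [hQdef]; exact fun P hP p hp => ⟨P, hP, hp⟩
  have hsubZ : ∀ p ∈ Q, p ⊆ ⋃₀ Q := fun p hp => subset_sUnion_of_mem hp
  have hsingreg : RegularFamily α {(∅ : Set A)} := by
    refine ⟨?_, ?_, rfl, ?_⟩
    · rintro p rfl q rfl; exact Or.inl (Subset.refl _)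
    · intro γ hγ ⟨x, hx⟩
      exact ⟨x, hx, fun y hy => by rw [hγ hx, hγ hy]⟩
    · rintro p rfl hne
      exact absurd rfl (nonempty_iff_ne_empty.1 hne)
  have hemptyQ : (∅ : Set A) ∈ Q := hQback _ hsingreg ∅ rfl
  have hchainQ : ∀ p ∈ Q, ∀ q ∈ Q, p ⊆ q ∨ q ⊆ p := by
    intro p hp q hq
    obtain ⟨P, hP, hpP⟩ := hQmem p hp
    obtain ⟨P', hP', hqP'⟩ := hQmem q hq
    exact crossComp hP hP' p hpP q hqP'
  have hleastQ : ∀ γ ⊆ Q, γ.Nonempty → ∃ m ∈ γ, ∀ x ∈ γ, m ⊆ x := by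
    rintro γ hγ ⟨x, hx⟩
    obtain ⟨P, hP, hxP⟩ := hQmem x (hγ hx)
    obtain ⟨m, hm, hmin⟩ := hP.2.1 (γ ∩ P) inter_subset_right ⟨x, hx, hxP⟩
    refine ⟨m, hm.1, fun y hy => ?_⟩
    by_contra hmy
    obtain ⟨P', hP', hyP'⟩ := hQmem y (hγ hy)
    rcases crossComp hP' hP y hyP' m hm.2 with h | h
    · have hss : y ⊂ m := ssubset_of_subset_of_ne h (by rintro rfl; exact hmy (Subset.refl _))
      have hyP : y ∈ P := absorb hfresh hP hP' y hyP' ⟨m, hm.2, hss⟩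
      exact hmy (hmin y ⟨hy, hyP⟩)
    · exact hmy h
  set Z := ⋃₀ Q with hZdef
  set w := Z ∪ {α Z} with hwdef
  have main : Z ≠ univ → RegularFamily α (Q ∪ {w}) ∧ Q ⊂ Q ∪ {w} := by
    intro hne
    have hαZ : α Z ∉ Z := hfresh Z hne
    have hZw : Z ⊂ w := ⟨subset_union_left, fun hc => hαZ (hc (mem_union_right _ rfl))⟩
    have hwQss : ∀ p ∈ Q, p ⊂ w := fun p hp => (hsubZ p hp).trans_ssubset hZw
    have hwnotQ : w ∉ Q := fun hc => (hwQss w hc).2 (Subset.refl _)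
    constructor
    · refine ⟨?_, ?_, mem_union_left _ hemptyQ, ?_⟩
      · -- chain
        rintro p (hp | hp) q (hq | hq)
        · exact hchainQ p hp q hq
        · rw [mem_singleton_iff] at hq; subst hq; exact Or.inl (hwQss p hp).1
        · rw [mem_singleton_iff] at hp; subst hp; exact Or.inr (hwQss q hq).1
        · rw [mem_singleton_iff] at hp hq; subst hp; subst hq; exact Or.inl (Subset.refl _)
      · -- least elements
        rintro γ hγ hγne
        by_cases hcase : (γ ∩ Q).Nonempty
        · obtain ⟨m, hm, hmin⟩ := hleastQ (γ ∩ Q) inter_subset_right hcase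
          refine ⟨m, hm.1, fun y hy => ?_⟩
          rcases hγ hy with hyQ | hyw
          · exact hmin y ⟨hy, hyQ⟩
          · rw [mem_singleton_iff] at hyw; subst hyw; exact (hwQss m hm.2).1
        · obtain ⟨x, hx⟩ := hγne
          have hxw : x = w := by
            rcases hγ hx with h | h
            · exact absurd ⟨x, hx, h⟩ hcase
            · exact h
          refine ⟨x, hx, fun y hy => ?_⟩
          have hyw : y = w := by
            rcases hγ hy with h | h
            · exact absurd ⟨y, hy, h⟩ hcase
            · exact h
          rw [hxw, hyw]
      · -- successor condition
        rintro p (hpQ | hpw) hpne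
        · obtain ⟨P, hP, hpP⟩ := hQmem p hpQ
          have hseteq : {q ∈ Q ∪ {w} | q ⊂ p} = {q ∈ P | q ⊂ p} := by
            ext q
            simp only [mem_sep_iff, mem_union, mem_singleton_iff]
            constructor
            · rintro ⟨hq | hq, hqp⟩
              · obtain ⟨P', hP', hqP'⟩ := hQmem q hq
                exact ⟨absorb hfresh hP hP' q hqP' ⟨p, hpP, hqp⟩, hqp⟩
              · subst hq
                exact absurd (hqp.trans (hwQss p hpQ)) (ssubset_irrefl _)
            · rintro ⟨hq, hqp⟩
              exact ⟨Or.inl (hQback P hP q hq), hqp⟩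
          rw [hseteq]
          exact hP.2.2.2 p hpP hpne
        · rw [mem_singleton_iff] at hpw
          subst hpw
          have huni : ⋃₀ {q ∈ Q ∪ {w} | q ⊂ w} = Z := by
            apply subset_antisymm
            · apply sUnion_subset
              rintro q ⟨hq | hq, hqw⟩
              · exact hsubZ q hq
              · rw [mem_singleton_iff] at hq; subst hq
                exact absurd hqw (ssubset_irrefl _)
            · rintro x ⟨q, hq, hxq⟩
              exact ⟨q, ⟨Or.inl hq, hwQss q hq⟩, hxq⟩
          rw [huni]
    · exact ⟨subset_union_left, fun hc => hwnotQ (hc (mem_union_right _ rfl))⟩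
  refine ⟨main, ?_⟩
  by_contra hne
  obtain ⟨hreg, hss⟩ := main hne
  have hwQ : w ∈ Q := hQback _ hreg w (mem_union_right _ rfl)
  exact hss.2 (union_subset (Subset.refl _) (singleton_subset_iff.2 hwQ))
end

section
/- If P₁ and P₂ are regular families of subsets of A, neither contained in the other via initial segments, and r₁, r₂ are the least elements of P₁ \ P₃ and P₂ \ P₃ respectively (where P₃ = {p ∈ P₁ ∩ P₂ : {q ∈ P₁ : q ⊊ p} = {q ∈ P₂ : q ⊊ p}}), then r₁ = ⋃P₃ ∪ {α(⋃P₃)} = r₂. -/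
open Set

variable {A : Type*}

lemma least_above_aux
    (α : Set A → A)
    (P₁ P₂ : Set (Set A)) (h₁ : RegularFamily α P₁) (h₂ : RegularFamily α P₂)
    (P₃ : Set (Set A))
    (hP₃ : P₃ = {p ∈ P₁ ∩ P₂ | {q ∈ P₁ | q ⊂ p} = {q ∈ P₂ | q ⊂ p}})
    (r₁ : Set A) (hr₁ : r₁ ∈ P₁ \ P₃) (hr₁least : ∀ x ∈ P₁ \ P₃, r₁ ⊆ x) :
    r₁ = (⋃₀ P₃) ∪ {α (⋃₀ P₃)} := by
  obtain ⟨hlin₁, _, hemp₁, hreg₁⟩ := h₁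
  obtain ⟨_, _, hemp₂, _⟩ := h₂
  have hemp₃ : ∅ ∈ P₃ := by
    rw [hP₃]
    refine ⟨⟨hemp₁, hemp₂⟩, ?_⟩
    ext q
    simp only [mem_setOf_eq]
    constructor
    · rintro ⟨_, hq⟩; exact absurd hq.subset (by simpa using hq.ne)
    · rintro ⟨_, hq⟩; exact absurd hq.subset (by simpa using hq.ne)
  have hdown : ∀ p ∈ P₃, ∀ q, q ⊂ p → (q ∈ P₁ ∨ q ∈ P₂) → q ∈ P₃ := by
    intro p hp q hq hq1
    rw [hP₃] at hp ⊢
    obtain ⟨⟨hp1, hp2⟩, hseg⟩ := hp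
    have hq12 : q ∈ P₁ ∧ q ∈ P₂ := by
      rcases hq1 with h | h
      · have : q ∈ {q ∈ P₂ | q ⊂ p} := by rw [← hseg]; exact ⟨h, hq⟩
        exact ⟨h, this.1⟩
      · have : q ∈ {q ∈ P₁ | q ⊂ p} := by rw [hseg]; exact ⟨h, hq⟩
        exact ⟨this.1, h⟩
    refine ⟨hq12, ?_⟩
    ext s
    constructor
    · rintro ⟨hs1, hsq⟩
      have : s ∈ {q ∈ P₂ | q ⊂ p} := by rw [← hseg]; exact ⟨hs1, hsq.trans hq⟩
      exact ⟨this.1, hsq⟩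
    · rintro ⟨hs2, hsq⟩
      have : s ∈ {q ∈ P₁ | q ⊂ p} := by rw [hseg]; exact ⟨hs2, hsq.trans hq⟩
      exact ⟨this.1, hsq⟩
  have hseg1 : {q ∈ P₁ | q ⊂ r₁} = P₃ := by
    ext q
    constructor
    · rintro ⟨hq1, hqr⟩
      by_contra hq3
      exact hqr.2 (hr₁least q ⟨hq1, hq3⟩)
    · intro hq3
      have hq1 : q ∈ P₁ := by rw [hP₃] at hq3; exact hq3.1.1
      refine ⟨hq1, ?_⟩
      rcases hlin₁ q hq1 r₁ hr₁.1 with h | h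
      · refine ssubset_of_subset_of_ne h (fun he => hr₁.2 ?_)
        rw [← he]; exact hq3
      · by_cases he : r₁ = q
        · rw [← he] at hq3; exact absurd hq3 hr₁.2
        · exact absurd (hdown q hq3 r₁ (ssubset_of_subset_of_ne h he) (Or.inl hr₁.1))
            hr₁.2
  have hne1 : r₁.Nonempty := by
    rcases r₁.eq_empty_or_nonempty with h | h
    · rw [h] at hr₁; exact absurd hemp₃ hr₁.2
    · exact h
  have h1 := hreg₁ r₁ hr₁.1 hne1
  rwa [hseg1] at h1

theorem least_above_common_segment
    (φ : Set A → A) (hφ : ∀ X : Set A, X.Nonempty → φ X ∈ X)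
    (α : Set A → A) (hα : ∀ X : Set A, α X = φ Xᶜ)
    (P₁ P₂ : Set (Set A)) (h₁ : RegularFamily α P₁) (h₂ : RegularFamily α P₂)
    (P₃ : Set (Set A))
    (hP₃ : P₃ = {p ∈ P₁ ∩ P₂ | {q ∈ P₁ | q ⊂ p} = {q ∈ P₂ | q ⊂ p}})
    (hne₁ : (P₁ \ P₃).Nonempty) (hne₂ : (P₂ \ P₃).Nonempty)
    (r₁ : Set A) (hr₁ : r₁ ∈ P₁ \ P₃) (hr₁least : ∀ x ∈ P₁ \ P₃, r₁ ⊆ x)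
    (r₂ : Set A) (hr₂ : r₂ ∈ P₂ \ P₃) (hr₂least : ∀ x ∈ P₂ \ P₃, r₂ ⊆ x) :
    r₁ = (⋃₀ P₃) ∪ {α (⋃₀ P₃)} ∧ r₂ = (⋃₀ P₃) ∪ {α (⋃₀ P₃)} := by
  have hP₃' : P₃ = {p ∈ P₂ ∩ P₁ | {q ∈ P₂ | q ⊂ p} = {q ∈ P₁ | q ⊂ p}} := by
    rw [hP₃]; ext p
    exact ⟨fun ⟨⟨a, b⟩, c⟩ => ⟨⟨b, a⟩, c.symm⟩, fun ⟨⟨a, b⟩, c⟩ => ⟨⟨b, a⟩, c.symm⟩⟩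
  exact ⟨least_above_aux α P₁ P₂ h₁ h₂ P₃ hP₃ r₁ hr₁ hr₁least,
         least_above_aux α P₂ P₁ h₂ h₁ P₃ hP₃' r₂ hr₂ hr₂least⟩
end

section
/- In the maximal regular family Q on A, for every a ∈ A, if r is the least element of {q ∈ Q : a ∈ q} and r₁ = ⋃{q ∈ Q : q ⊊ r}, then a ∉ r₁ and α(r₁) = a. -/
open Set

variable {A : Type*}

/-- Elements of two regular families are comparable. -/
lemma reg_comparable (α : Set A → A) {P P' : Set (Set A)}
    (hP : RegularFamily α P) (hP' : RegularFamily α P')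
    {p p' : Set A} (hp : p ∈ P) (hp' : p' ∈ P') : p ⊆ p' ∨ p' ⊆ p := by
  by_contra hbad0
  -- least bad element of P
  obtain ⟨p₀, ⟨hp₀P, hp₀bad⟩, hp₀min⟩ :=
    hP.2.1 {x ∈ P | ∃ y ∈ P', ¬(x ⊆ y ∨ y ⊆ x)} (fun x hx => hx.1)
      ⟨p, hp, p', hp', hbad0⟩
  -- least element of P' incomparable with p₀
  obtain ⟨y, hyP', hy⟩ := hp₀bad
  obtain ⟨p'₀, ⟨hp'₀P, hinc⟩, hp'₀min⟩ :=
    hP'.2.1 {x ∈ P' | ¬(p₀ ⊆ x ∨ x ⊆ p₀)} (fun x hx => hx.1) ⟨y, hyP', hy⟩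
  have hp₀ne : p₀.Nonempty := by
    rcases p₀.eq_empty_or_nonempty with h | h
    · exact absurd (Or.inl (h ▸ empty_subset _)) hinc
    · exact h
  have hp'₀ne : p'₀.Nonempty := by
    rcases p'₀.eq_empty_or_nonempty with h | h
    · exact absurd (Or.inr (h ▸ empty_subset _)) hinc
    · exact h
  set s := ⋃₀ {q ∈ P | q ⊂ p₀} with hs
  set t := ⋃₀ {q ∈ P' | q ⊂ p'₀} with ht
  have hp₀eq : p₀ = s ∪ {α s} := hP.2.2.2 p₀ hp₀P hp₀ne
  have hp'₀eq : p'₀ = t ∪ {α t} := hP'.2.2.2 p'₀ hp'₀P hp'₀ne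
  have hsub : s ⊆ p'₀ := by
    rintro x ⟨q, ⟨hqP, hqlt⟩, hxq⟩
    have hqgood : ∀ y ∈ P', q ⊆ y ∨ y ⊆ q := by
      intro y hyP' ; by_contra hbad
      exact hqlt.not_subset (hp₀min q ⟨hqP, y, hyP', hbad⟩)
    rcases hqgood p'₀ hp'₀P with h | h
    · exact h hxq
    · exact absurd (Or.inr (h.trans hqlt.subset)) hinc
  have htsub : t ⊆ p₀ := by
    rintro x ⟨q, ⟨hqP', hqlt⟩, hxq⟩
    have : ¬¬(p₀ ⊆ q ∨ q ⊆ p₀) := fun hbad => hqlt.not_subset (hp'₀min q ⟨hqP', hbad⟩)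
    rcases not_not.mp this with h | h
    · exact absurd (Or.inl (h.trans hqlt.subset)) hinc
    · exact h hxq
  have hαs : α s ∉ p'₀ := fun hmem => by
    refine hinc (Or.inl ?_)
    rw [hp₀eq]
    exact union_subset hsub (by simpa using hmem)
  have hαt : α t ∉ p₀ := fun hmem => by
    refine hinc (Or.inr ?_)
    rw [hp'₀eq]
    exact union_subset htsub (by simpa using hmem)
  have htp'₀ : t ⊆ p'₀ := hp'₀eq.symm ▸ subset_union_left
  have hsp₀ : s ⊆ p₀ := hp₀eq.symm ▸ subset_union_left
  have hts : t ⊆ s := by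
    intro x hx
    rcases hp₀eq ▸ htsub hx with h | h
    · exact h
    · simp only [mem_singleton_iff] at h
      exact absurd (h ▸ htp'₀ hx) hαs
  have hst : s ⊆ t := by
    intro x hx
    rcases hp'₀eq ▸ hsub hx with h | h
    · exact h
    · simp only [mem_singleton_iff] at h
      exact absurd (h ▸ hsp₀ hx) hαt
  have : p₀ = p'₀ := by rw [hp₀eq, hp'₀eq, hst.antisymm hts]
  exact hinc (Or.inl this.subset)

/-- If `p' ∈ P'` is strictly below `p ∈ P`, then `p'` is contained in the union of
the strict predecessors of `p` within `P`. -/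
lemma reg_lt_subset_sUnion (α : Set A → A) {P P' : Set (Set A)}
    (hP : RegularFamily α P) (hP' : RegularFamily α P')
    {p p' : Set A} (hp : p ∈ P) (hp' : p' ∈ P') (hlt : p' ⊂ p) :
    p' ⊆ ⋃₀ {q ∈ P | q ⊂ p} := by
  -- least element of P not contained in p'
  obtain ⟨q₀, ⟨hq₀P, hq₀ns⟩, hq₀min⟩ :=
    hP.2.1 {q ∈ P | ¬ q ⊆ p'} (fun x hx => hx.1) ⟨p, hp, hlt.not_subset⟩
  have hq₀p : q₀ ⊆ p := hq₀min p ⟨hp, hlt.not_subset⟩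
  have hq₀ne : q₀.Nonempty := by
    rcases q₀.eq_empty_or_nonempty with h | h
    · exact absurd (h ▸ empty_subset _) hq₀ns
    · exact h
  set u := ⋃₀ {q ∈ P | q ⊂ q₀} with hu
  have hq₀eq : q₀ = u ∪ {α u} := hP.2.2.2 q₀ hq₀P hq₀ne
  have hup' : u ⊆ p' := by
    rintro x ⟨q, ⟨hqP, hqlt⟩, hxq⟩
    by_contra hxnot
    have hqsub : q ⊆ p' := by
      by_contra hn
      exact hqlt.not_subset (hq₀min q ⟨hqP, hn⟩)
    exact hxnot (hqsub hxq)
  have hp'q₀ : p' ⊆ q₀ := by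
    rcases reg_comparable α hP hP' hq₀P hp' with h | h
    · exact absurd h hq₀ns
    · exact h
  have hαu : α u ∉ p' := by
    intro hmem
    refine hq₀ns ?_
    rw [hq₀eq]
    exact union_subset hup' (by simpa using hmem)
  have hp'u : p' ⊆ u := by
    intro x hx
    rcases hq₀eq ▸ hp'q₀ hx with h | h
    · exact h
    · simp only [mem_singleton_iff] at h
      exact absurd (h ▸ hx) hαu
  refine hp'u.trans ?_
  rintro x ⟨q, ⟨hqP, hqlt⟩, hxq⟩
  exact ⟨q, ⟨hqP, hqlt.trans_subset hq₀p⟩, hxq⟩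

theorem alpha_hits_a
    (φ : Set A → A) (hφ : ∀ X : Set A, X.Nonempty → φ X ∈ X)
    (α : Set A → A) (hα : ∀ X : Set A, α X = φ Xᶜ)
    (Q : Set (Set A)) (hQdef : Q = {p : Set A | ∃ P : Set (Set A), RegularFamily α P ∧ p ∈ P})
    (a : A) (r : Set A) (hr : r ∈ {q ∈ Q | a ∈ q})
    (hrleast : ∀ q ∈ {q ∈ Q | a ∈ q}, r ⊆ q) :
    a ∉ ⋃₀ {q ∈ Q | q ⊂ r} ∧ α (⋃₀ {q ∈ Q | q ⊂ r}) = a := by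
  obtain ⟨hrQ, har⟩ := hr
  obtain ⟨P, hPreg, hrP⟩ : ∃ P : Set (Set A), RegularFamily α P ∧ r ∈ P := by
    rw [hQdef] at hrQ; exact hrQ
  have hnotin : a ∉ ⋃₀ {q ∈ Q | q ⊂ r} := by
    rintro ⟨q, ⟨hqQ, hqlt⟩, haq⟩
    exact hqlt.not_subset (hrleast q ⟨hqQ, haq⟩)
  refine ⟨hnotin, ?_⟩
  have hQeq : ⋃₀ {q ∈ Q | q ⊂ r} = ⋃₀ {q ∈ P | q ⊂ r} := by
    apply subset_antisymm
    · rintro x ⟨q, ⟨hqQ, hqlt⟩, hxq⟩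
      obtain ⟨P', hP'reg, hqP'⟩ : ∃ P' : Set (Set A), RegularFamily α P' ∧ q ∈ P' := by
        rw [hQdef] at hqQ; exact hqQ
      exact reg_lt_subset_sUnion α hPreg hP'reg hrP hqP' hqlt hxq
    · rintro x ⟨q, ⟨hqP, hqlt⟩, hxq⟩
      exact ⟨q, ⟨hQdef ▸ ⟨P, hPreg, hqP⟩, hqlt⟩, hxq⟩
  have hrne : r.Nonempty := ⟨a, har⟩
  have hreq : r = (⋃₀ {q ∈ P | q ⊂ r}) ∪ {α (⋃₀ {q ∈ P | q ⊂ r})} :=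
    hPreg.2.2.2 r hrP hrne
  have hanots : a ∉ ⋃₀ {q ∈ P | q ⊂ r} := by rw [← hQeq]; exact hnotin
  have : a ∈ (⋃₀ {q ∈ P | q ⊂ r}) ∪ {α (⋃₀ {q ∈ P | q ⊂ r})} := hreq ▸ har
  rcases this with h | h
  · exact absurd h hanots
  · simp only [mem_singleton_iff] at h
    rw [hQeq, h]
end
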